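/- Let W be the lazy random walk on a finite simple connected regular graph G = (V,E), and define H^W_ρ(m) = Σ_{i=0}^{m} Σ_{j=0}^{m} P_ρ(W(i+j) = ρ). If m ≥ t_mix + 1, then H^W_ρ(m) ≤ sup_{ρ'∈V} H^{W}_{ρ'}(t_mix) + (5/2)·m²/#V. -/

import Mathlib

open Finset

variable {V : Type*} [Fintype V] [DecidableEq V] [Nonempty V]

/-- One-step transition kernel of the lazy random walk on `G`:
stay put with probability `1/2`, otherwise move to a uniformly chosen neighbour. -/
noncomputable def lazyStep (G : SimpleGraph V) [DecidableRel G.Adj] (x y : V) : ℝ :=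
  if x = y then 1 / 2 else if G.Adj x y then 1 / (2 * (G.degree x : ℝ)) else 0

/-- `n`-step transition probabilities of the lazy random walk. -/
noncomputable def lazyProb (G : SimpleGraph V) [DecidableRel G.Adj] : ℕ → V → V → ℝ
  | 0, x, y => if x = y then 1 else 0
  | n + 1, x, y => ∑ z : V, lazyStep G x z * lazyProb G n z y

/-- The stationary (degree-biased) distribution `π(x) = deg(x)/(2#E)`. -/
noncomputable def statDist (G : SimpleGraph V) [DecidableRel G.Adj] (x : V) : ℝ :=
  (G.degree x : ℝ) / (2 * (G.edgeFinset.card : ℝ))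

/-- The uniform `(ℓ∞, 1/4)` mixing time. -/
noncomputable def tmix (G : SimpleGraph V) [DecidableRel G.Adj] : ℕ :=
  sInf {n : ℕ | ∀ x y : V, |lazyProb G n x y / statDist G y - 1| ≤ 1 / 4}

/-- Extension of a finite path to all of `ℕ` (constant after time `N`). -/
def extPath (N : ℕ) (γ : Fin (N + 1) → V) : ℕ → V :=
  fun n => γ ⟨min n N, Nat.lt_succ_of_le (min_le_right n N)⟩

/-- Weight of a finite path under the lazy random walk kernel. -/
noncomputable def pathWeight (G : SimpleGraph V) [DecidableRel G.Adj]
    (N : ℕ) (γ : Fin (N + 1) → V) : ℝ :=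
  ∏ i ∈ Finset.range N, lazyStep G (extPath N γ i) (extPath N γ (i + 1))

open Classical in
/-- Probability, for the lazy random walk started at `ρ`, of a path event
depending only on the first `N+1` coordinates. -/
noncomputable def walkProb (G : SimpleGraph V) [DecidableRel G.Adj]
    (ρ : V) (N : ℕ) (E : (ℕ → V) → Prop) : ℝ :=
  ∑ γ : Fin (N + 1) → V,
    if extPath N γ 0 = ρ ∧ E (extPath N γ) then pathWeight G N γ else 0

open Classical in
/-- Expectation, for the lazy random walk started at `ρ`, of a path functional
depending only on the first `N+1` coordinates. -/
noncomputable def walkExp (G : SimpleGraph V) [DecidableRel G.Adj]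
    (ρ : V) (N : ℕ) (f : (ℕ → V) → ℝ) : ℝ :=
  ∑ γ : Fin (N + 1) → V,
    if extPath N γ 0 = ρ then pathWeight G N γ * f (extPath N γ) else 0

open Classical in
/-- Probability of a path event for the lazy random walk started from `π`. -/
noncomputable def walkProbStat (G : SimpleGraph V) [DecidableRel G.Adj]
    (N : ℕ) (E : (ℕ → V) → Prop) : ℝ :=
  ∑ γ : Fin (N + 1) → V,
    if E (extPath N γ) then statDist G (extPath N γ 0) * pathWeight G N γ else 0

/-- Expectation of a path functional for the lazy random walk started from `π`. -/
noncomputable def walkExpStat (G : SimpleGraph V) [DecidableRel G.Adj]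
    (N : ℕ) (f : (ℕ → V) → ℝ) : ℝ :=
  ∑ γ : Fin (N + 1) → V,
    statDist G (extPath N γ 0) * pathWeight G N γ * f (extPath N γ)

open Classical in
/-- Probability of a joint event for two independent lazy random walks,
each started from the stationary distribution. -/
noncomputable def twoWalkProbStat (G : SimpleGraph V) [DecidableRel G.Adj]
    (N : ℕ) (E : (ℕ → V) → (ℕ → V) → Prop) : ℝ :=
  ∑ γ₁ : Fin (N + 1) → V, ∑ γ₂ : Fin (N + 1) → V,
    if E (extPath N γ₁) (extPath N γ₂) then
      (statDist G (extPath N γ₁ 0) * pathWeight G N γ₁) *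
      (statDist G (extPath N γ₂ 0) * pathWeight G N γ₂) else 0

open Classical in
/-- Probability of a joint event for two independent lazy random walks,
both started at the vertex `ρ`. -/
noncomputable def twoWalkProbFrom (G : SimpleGraph V) [DecidableRel G.Adj]
    (ρ : V) (N : ℕ) (E : (ℕ → V) → (ℕ → V) → Prop) : ℝ :=
  ∑ γ₁ : Fin (N + 1) → V, ∑ γ₂ : Fin (N + 1) → V,
    if extPath N γ₁ 0 = ρ ∧ extPath N γ₂ 0 = ρ ∧ E (extPath N γ₁) (extPath N γ₂) then
      pathWeight G N γ₁ * pathWeight G N γ₂ else 0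

/-- Range of a path over a finite set of times. -/
def walkRange (w : ℕ → V) (A : Finset ℕ) : Finset V := A.image w

/-- `q̄^G(s)`: averaged intersection probability of two independent lazy walks
started at the same (uniform) vertex. -/
noncomputable def qbar (G : SimpleGraph V) [DecidableRel G.Adj] (s : ℕ) : ℝ :=
  (1 / (Fintype.card V : ℝ)) * ∑ ρ : V,
    twoWalkProbFrom G ρ s (fun w₁ w₂ =>
      (walkRange w₁ (Finset.Icc 0 s) ∩ walkRange w₂ (Finset.Icc 1 s)).Nonempty)

/-- `H^W_ρ(m) = Σ_{i=0}^m Σ_{j=0}^m P_ρ(W(i+j)=ρ)`. -/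
noncomputable def HW (G : SimpleGraph V) [DecidableRel G.Adj] (ρ : V) (m : ℕ) : ℝ :=
  ∑ i ∈ Finset.range (m + 1), ∑ j ∈ Finset.range (m + 1), lazyProb G (i + j) ρ ρ


section Aux

variable (G : SimpleGraph V) [DecidableRel G.Adj]

lemma lazyStep_nonneg (x y : V) : 0 ≤ lazyStep G x y := by
  unfold lazyStep; split_ifs <;> positivity

lemma lazyProb_nonneg (n : ℕ) (x y : V) : 0 ≤ lazyProb G n x y := by
  induction n generalizing x y with
  | zero => unfold lazyProb; split_ifs <;> norm_num
  | succ n ih =>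
    unfold lazyProb
    exact Finset.sum_nonneg fun z _ => mul_nonneg (lazyStep_nonneg G x z) (ih z y)

lemma lazyStep_eq (x y : V) :
    lazyStep G x y = (if x = y then (1:ℝ)/2 else 0) +
      (if G.Adj x y then 1 / (2 * (G.degree x : ℝ)) else 0) := by
  unfold lazyStep
  by_cases h : x = y
  · subst h; simp
  · simp [h]

lemma lazyStep_sum (x : V) (hd : 0 < G.degree x) : ∑ y : V, lazyStep G x y = 1 := by
  have h1 : ∀ y, lazyStep G x y = (if x = y then (1:ℝ)/2 else 0) +
      (if G.Adj x y then 1 / (2 * (G.degree x : ℝ)) else 0) := lazyStep_eq G x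
  rw [Finset.sum_congr rfl fun y _ => h1 y, Finset.sum_add_distrib,
    Finset.sum_ite_eq Finset.univ x (fun _ => (1:ℝ)/2)]
  have h2 : ∑ y : V, (if G.Adj x y then 1 / (2 * (G.degree x : ℝ)) else 0)
      = (G.degree x : ℝ) * (1 / (2 * (G.degree x : ℝ))) := by
    rw [Finset.sum_ite, Finset.sum_const_zero, Finset.sum_const, add_zero]
    have : Finset.univ.filter (fun y => G.Adj x y) = G.neighborFinset x := by
      ext y; simp [SimpleGraph.mem_neighborFinset]
    rw [this, G.card_neighborFinset_eq_degree]
    simp [mul_comm]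
  rw [h2]
  have hd' : (G.degree x : ℝ) ≠ 0 := by positivity
  field_simp
  norm_num

lemma lazyStep_symm {d : ℕ} (hreg : G.IsRegularOfDegree d) (x y : V) :
    lazyStep G x y = lazyStep G y x := by
  unfold lazyStep
  rcases eq_or_ne x y with h | h
  · subst h; simp
  · simp only [h, h.symm, if_false]
    by_cases ha : G.Adj x y
    · simp [ha, ha.symm, hreg x, hreg y]
    · have ha' : ¬ G.Adj y x := fun h' => ha h'.symm
      simp [ha, ha']

lemma lazyProb_sum_right (hd : ∀ x : V, 0 < G.degree x) (n : ℕ) (x : V) :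
    ∑ y : V, lazyProb G n x y = 1 := by
  induction n generalizing x with
  | zero => simp [lazyProb]
  | succ n ih =>
    unfold lazyProb
    rw [Finset.sum_comm]
    calc ∑ z : V, ∑ y : V, lazyStep G x z * lazyProb G n z y
        = ∑ z : V, lazyStep G x z * ∑ y : V, lazyProb G n z y := by
          simp [Finset.mul_sum]
      _ = ∑ z : V, lazyStep G x z := by
          refine Finset.sum_congr rfl fun z _ => ?_; rw [ih z, mul_one]
      _ = 1 := lazyStep_sum G x (hd x)

lemma lazyProb_sum_left {d : ℕ} (hreg : G.IsRegularOfDegree d) (hd : ∀ x : V, 0 < G.degree x)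
    (n : ℕ) (y : V) : ∑ x : V, lazyProb G n x y = 1 := by
  induction n with
  | zero => simp [lazyProb, eq_comm]
  | succ n ih =>
    unfold lazyProb
    rw [Finset.sum_comm]
    calc ∑ z : V, ∑ x : V, lazyStep G x z * lazyProb G n z y
        = ∑ z : V, (∑ x : V, lazyStep G x z) * lazyProb G n z y := by
          simp [Finset.sum_mul]
      _ = ∑ z : V, lazyProb G n z y := by
          refine Finset.sum_congr rfl fun z _ => ?_
          have : ∑ x : V, lazyStep G x z = ∑ x : V, lazyStep G z x :=
            Finset.sum_congr rfl fun x _ => lazyStep_symm G hreg x z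
          rw [this, lazyStep_sum G z (hd z), one_mul]
      _ = 1 := ih

lemma lazyProb_add (a b : ℕ) (x y : V) :
    lazyProb G (a + b) x y = ∑ z : V, lazyProb G a x z * lazyProb G b z y := by
  induction a generalizing x with
  | zero => simp [lazyProb, Finset.sum_ite_eq, zero_add]
  | succ a ih =>
    have h : a + 1 + b = (a + b) + 1 := by omega
    rw [h]
    have e1 : lazyProb G (a + b + 1) x y = ∑ w : V, lazyStep G x w * lazyProb G (a + b) w y := rfl
    have e2 : ∀ z, lazyProb G (a + 1) x z = ∑ w : V, lazyStep G x w * lazyProb G a w z :=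
      fun z => rfl
    rw [e1]
    calc ∑ w : V, lazyStep G x w * lazyProb G (a + b) w y
        = ∑ w : V, lazyStep G x w * ∑ z : V, lazyProb G a w z * lazyProb G b z y := by
          refine Finset.sum_congr rfl fun w _ => ?_; rw [ih w]
      _ = ∑ w : V, ∑ z : V, lazyStep G x w * lazyProb G a w z * lazyProb G b z y := by
          simp [Finset.mul_sum, mul_assoc]
      _ = ∑ z : V, (∑ w : V, lazyStep G x w * lazyProb G a w z) * lazyProb G b z y := by
          rw [Finset.sum_comm]; simp [Finset.sum_mul]
      _ = ∑ z : V, lazyProb G (a + 1) x z * lazyProb G b z y := by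
          refine Finset.sum_congr rfl fun z _ => ?_; rw [e2 z]

lemma lazyProb_succ_ge (n : ℕ) (x y : V) :
    lazyProb G n x y / 2 ≤ lazyProb G (n + 1) x y := by
  have h : lazyProb G (n + 1) x y = ∑ z : V, lazyStep G x z * lazyProb G n z y := rfl
  rw [h]
  have : lazyStep G x x * lazyProb G n x y = lazyProb G n x y / 2 := by
    unfold lazyStep; simp; ring
  rw [← this]
  exact Finset.single_le_sum
    (fun z _ => mul_nonneg (lazyStep_nonneg G x z) (lazyProb_nonneg G n z y))
    (Finset.mem_univ x)

lemma lazyProb_pos_of_le {a n : ℕ} (h : a ≤ n) {x y : V} (hp : 0 < lazyProb G a x y) :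
    0 < lazyProb G n x y := by
  induction n with
  | zero => obtain rfl : a = 0 := Nat.le_zero.mp h; exact hp
  | succ n ih =>
    rcases eq_or_lt_of_le h with rfl | h'
    · exact hp
    · have hpos := ih (Nat.lt_succ_iff.mp h')
      linarith [lazyProb_succ_ge G n x y]

lemma lazyProb_pos_walk (x y : V) (w : G.Walk x y) : 0 < lazyProb G w.length x y := by
  induction w with
  | nil => simp [lazyProb]
  | @cons u v t hadj w ih =>
    rw [SimpleGraph.Walk.length_cons]
    have hstep : 0 < lazyStep G u v := by
      unfold lazyStep
      have hne : u ≠ v := hadj.ne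
      have hdeg : 0 < G.degree u := by
        rw [SimpleGraph.degree_pos_iff_exists_adj]; exact ⟨v, hadj⟩
      simp only [hne, if_false, hadj, if_true]
      positivity
    have h : lazyProb G (w.length + 1) u t = ∑ z : V, lazyStep G u z * lazyProb G w.length z t := rfl
    rw [h]
    have hterm : 0 < lazyStep G u v * lazyProb G w.length v t := mul_pos hstep ih
    refine lt_of_lt_of_le hterm (Finset.single_le_sum
      (fun z _ => mul_nonneg (lazyStep_nonneg G u z) (lazyProb_nonneg G w.length z t))
      (Finset.mem_univ v))

lemma degree_pos_of_connected (hconn : G.Connected) (hcard : 2 ≤ Fintype.card V) (x : V) :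
    0 < G.degree x := by
  rw [SimpleGraph.degree_pos_iff_exists_adj]
  obtain ⟨y, hy⟩ := Fintype.exists_ne_of_one_lt_card (by omega) x
  obtain ⟨w⟩ := hconn x y
  cases w with
  | nil => exact absurd rfl hy.symm
  | cons h _ => exact ⟨_, h⟩

lemma statDist_eq {d : ℕ} (hreg : G.IsRegularOfDegree d) (hd : 0 < d) (y : V) :
    statDist G y = 1 / (Fintype.card V : ℝ) := by
  unfold statDist
  have h2 : 2 * G.edgeFinset.card = Fintype.card V * d := by
    rw [← SimpleGraph.sum_degrees_eq_twice_card_edges]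
    simp [hreg _, Finset.sum_const, Finset.card_univ, mul_comm]
  have hN : 0 < Fintype.card V := Fintype.card_pos
  rw [hreg y]
  have : (2 : ℝ) * (G.edgeFinset.card : ℝ) = (Fintype.card V : ℝ) * d := by
    exact_mod_cast h2
  rw [this]
  field_simp

/-- All `n₀`-step transition probabilities are positive, where `n₀` dominates all distances. -/
lemma lazyProb_pos_all (hconn : G.Connected) (hcard : 2 ≤ Fintype.card V)
    {n : ℕ} (hn : ∀ x y : V, G.dist x y ≤ n) (x y : V) :
    0 < lazyProb G n x y := by
  obtain ⟨w, hw⟩ := (hconn x y).exists_walk_length_eq_dist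
  exact lazyProb_pos_of_le G (hw ▸ hn x y) (lazyProb_pos_walk G x y w)

/-- max over starting point of the `n`-step probability of ending at `y`. -/
noncomputable def pSup (G : SimpleGraph V) [DecidableRel G.Adj] (n : ℕ) (y : V) : ℝ :=
  Finset.univ.sup' Finset.univ_nonempty (fun x => lazyProb G n x y)

/-- min over starting point of the `n`-step probability of ending at `y`. -/
noncomputable def pInf (G : SimpleGraph V) [DecidableRel G.Adj] (n : ℕ) (y : V) : ℝ :=
  Finset.univ.inf' Finset.univ_nonempty (fun x => lazyProb G n x y)

lemma le_pSup (n : ℕ) (x y : V) : lazyProb G n x y ≤ pSup G n y := by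
  unfold pSup; exact Finset.le_sup' (fun x => lazyProb G n x y) (Finset.mem_univ x)

lemma pInf_le (n : ℕ) (x y : V) : pInf G n y ≤ lazyProb G n x y := by
  unfold pInf; exact Finset.inf'_le (fun x => lazyProb G n x y) (Finset.mem_univ x)

lemma osc_contract {d : ℕ} (hreg : G.IsRegularOfDegree d) (hd : ∀ x : V, 0 < G.degree x)
    {n₀ : ℕ} {δ : ℝ} (hδ : ∀ x z : V, δ ≤ lazyProb G n₀ x z) (hδ0 : 0 ≤ δ)
    (n : ℕ) (y : V) :
    pSup G (n₀ + n) y - pInf G (n₀ + n) y ≤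
      (1 - (Fintype.card V : ℝ) * δ) * (pSup G n y - pInf G n y) := by
  set N : ℝ := (Fintype.card V : ℝ)
  set M : ℝ := pSup G n y
  set mm : ℝ := pInf G n y
  have hcol : ∑ z : V, lazyProb G n z y = 1 := lazyProb_sum_left G hreg hd n y
  have key : ∀ x : V, lazyProb G (n₀ + n) x y
      = (∑ z : V, (lazyProb G n₀ x z - δ) * lazyProb G n z y) + δ := by
    intro x
    rw [lazyProb_add]
    have : ∀ z : V, lazyProb G n₀ x z * lazyProb G n z y
        = (lazyProb G n₀ x z - δ) * lazyProb G n z y + δ * lazyProb G n z y := by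
      intro z; ring
    rw [Finset.sum_congr rfl fun z _ => this z, Finset.sum_add_distrib, ← Finset.mul_sum, hcol,
      mul_one]
  have hrowsub : ∀ x : V, ∑ z : V, (lazyProb G n₀ x z - δ) = 1 - N * δ := by
    intro x
    rw [Finset.sum_sub_distrib, lazyProb_sum_right G hd, Finset.sum_const, Finset.card_univ,
      nsmul_eq_mul]
  have hub : ∀ x : V, lazyProb G (n₀ + n) x y ≤ (1 - N * δ) * M + δ := by
    intro x
    rw [key x]
    have : ∑ z : V, (lazyProb G n₀ x z - δ) * lazyProb G n z y
        ≤ ∑ z : V, (lazyProb G n₀ x z - δ) * M := by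
      refine Finset.sum_le_sum fun z _ => ?_
      exact mul_le_mul_of_nonneg_left (le_pSup G n z y) (sub_nonneg.mpr (hδ x z))
    rw [← Finset.sum_mul, hrowsub x] at this
    linarith
  have hlb : ∀ x : V, (1 - N * δ) * mm + δ ≤ lazyProb G (n₀ + n) x y := by
    intro x
    rw [key x]
    have : ∑ z : V, (lazyProb G n₀ x z - δ) * mm
        ≤ ∑ z : V, (lazyProb G n₀ x z - δ) * lazyProb G n z y := by
      refine Finset.sum_le_sum fun z _ => ?_
      exact mul_le_mul_of_nonneg_left (pInf_le G n z y) (sub_nonneg.mpr (hδ x z))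
    rw [← Finset.sum_mul, hrowsub x] at this
    linarith
  have h1 : pSup G (n₀ + n) y ≤ (1 - N * δ) * M + δ :=
    Finset.sup'_le _ _ fun x _ => hub x
  have h2 : (1 - N * δ) * mm + δ ≤ pInf G (n₀ + n) y :=
    Finset.le_inf' _ _ fun x _ => hlb x
  have : (1 - N * δ) * M - (1 - N * δ) * mm = (1 - N * δ) * (M - mm) := by ring
  linarith

lemma lazyProb_le_one (hd : ∀ x : V, 0 < G.degree x) (n : ℕ) (x y : V) :
    lazyProb G n x y ≤ 1 := by
  have := lazyProb_sum_right G hd n x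
  have h := Finset.single_le_sum (f := fun y => lazyProb G n x y)
    (fun z _ => lazyProb_nonneg G n x z) (Finset.mem_univ y)
  linarith

lemma osc_geom {d : ℕ} (hreg : G.IsRegularOfDegree d) (hd : ∀ x : V, 0 < G.degree x)
    {n₀ : ℕ} {δ : ℝ} (hδ : ∀ x z : V, δ ≤ lazyProb G n₀ x z) (hδ0 : 0 ≤ δ)
    (hNδ : (Fintype.card V : ℝ) * δ ≤ 1)
    (k : ℕ) (y : V) :
    pSup G (k * n₀) y - pInf G (k * n₀) y ≤ (1 - (Fintype.card V : ℝ) * δ) ^ k := by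
  induction k with
  | zero =>
    simp only [zero_mul, pow_zero]
    have h1 : pSup G 0 y ≤ 1 := Finset.sup'_le _ _ fun x _ => lazyProb_le_one G hd 0 x y
    have h2 : 0 ≤ pInf G 0 y := Finset.le_inf' _ _ fun x _ => lazyProb_nonneg G 0 x y
    linarith
  | succ k ih =>
    have he : (k + 1) * n₀ = n₀ + k * n₀ := by ring
    rw [he, pow_succ]
    calc pSup G (n₀ + k * n₀) y - pInf G (n₀ + k * n₀) y
        ≤ (1 - (Fintype.card V : ℝ) * δ) * (pSup G (k * n₀) y - pInf G (k * n₀) y) :=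
          osc_contract G hreg hd hδ hδ0 (k * n₀) y
      _ ≤ (1 - (Fintype.card V : ℝ) * δ) * (1 - (Fintype.card V : ℝ) * δ) ^ k := by
          exact mul_le_mul_of_nonneg_left ih (by linarith)
      _ = (1 - (Fintype.card V : ℝ) * δ) ^ k * (1 - (Fintype.card V : ℝ) * δ) := by ring

lemma abs_sub_inv_card_le {d : ℕ} (hreg : G.IsRegularOfDegree d) (hd : ∀ x : V, 0 < G.degree x)
    (n : ℕ) (x y : V) :
    |lazyProb G n x y - 1 / (Fintype.card V : ℝ)| ≤ pSup G n y - pInf G n y := by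
  have hN : (0:ℝ) < (Fintype.card V : ℝ) := by exact_mod_cast Fintype.card_pos
  have hcol : ∑ z : V, lazyProb G n z y = 1 := lazyProb_sum_left G hreg hd n y
  have hsup : 1 ≤ (Fintype.card V : ℝ) * pSup G n y := by
    have : ∑ z : V, lazyProb G n z y ≤ ∑ _z : V, pSup G n y :=
      Finset.sum_le_sum fun z _ => le_pSup G n z y
    rw [hcol, Finset.sum_const, Finset.card_univ, nsmul_eq_mul] at this
    exact this
  have hinf : (Fintype.card V : ℝ) * pInf G n y ≤ 1 := by
    have : ∑ _z : V, pInf G n y ≤ ∑ z : V, lazyProb G n z y :=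
      Finset.sum_le_sum fun z _ => pInf_le G n z y
    rw [hcol, Finset.sum_const, Finset.card_univ, nsmul_eq_mul] at this
    exact this
  have h1 : 1 / (Fintype.card V : ℝ) ≤ pSup G n y := by
    rw [div_le_iff₀ hN] at *
    nlinarith
  have h2 : pInf G n y ≤ 1 / (Fintype.card V : ℝ) := by
    rw [le_div_iff₀ hN]
    nlinarith
  rw [abs_le]
  constructor
  · have := pInf_le G n x y
    linarith
  · have := le_pSup G n x y
    linarith

lemma mix_upward (hd : ∀ x : V, 0 < G.degree x) {n : ℕ}
    (h : ∀ x y : V, |lazyProb G n x y / statDist G y - 1| ≤ 1 / 4) :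
    ∀ x y : V, |lazyProb G (n + 1) x y / statDist G y - 1| ≤ 1 / 4 := by
  intro x y
  have hsum : ∑ z : V, lazyStep G x z = 1 := lazyStep_sum G x (hd x)
  have e : lazyProb G (n + 1) x y / statDist G y - 1
      = ∑ z : V, lazyStep G x z * (lazyProb G n z y / statDist G y - 1) := by
    have h0 : lazyProb G (n + 1) x y = ∑ z : V, lazyStep G x z * lazyProb G n z y := rfl
    rw [h0, Finset.sum_div]
    simp only [mul_sub, mul_one, Finset.sum_sub_distrib, hsum, mul_div_assoc]
  rw [e]
  calc |∑ z : V, lazyStep G x z * (lazyProb G n z y / statDist G y - 1)|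
      ≤ ∑ z : V, |lazyStep G x z * (lazyProb G n z y / statDist G y - 1)| :=
        Finset.abs_sum_le_sum_abs _ _
    _ ≤ ∑ z : V, lazyStep G x z * (1 / 4) := by
        refine Finset.sum_le_sum fun z _ => ?_
        rw [abs_mul, abs_of_nonneg (lazyStep_nonneg G x z)]
        exact mul_le_mul_of_nonneg_left (h z y) (lazyStep_nonneg G x z)
    _ = 1 / 4 := by rw [← Finset.sum_mul, hsum, one_mul]

lemma mix_nonempty (hconn : G.Connected) (hcard : 2 ≤ Fintype.card V)
    {d : ℕ} (hreg : G.IsRegularOfDegree d) :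
    {n : ℕ | ∀ x y : V, |lazyProb G n x y / statDist G y - 1| ≤ 1 / 4}.Nonempty := by
  have hd : ∀ x : V, 0 < G.degree x := degree_pos_of_connected G hconn hcard
  have hdpos : 0 < d := by have := hd (Classical.arbitrary V); rwa [hreg _] at this
  have hN : (0:ℝ) < (Fintype.card V : ℝ) := by exact_mod_cast Fintype.card_pos
  set n₀ : ℕ := Finset.univ.sup (fun p : V × V => G.dist p.1 p.2) with hn₀
  have hdist : ∀ x y : V, G.dist x y ≤ n₀ := fun x y =>
    Finset.le_sup (f := fun p : V × V => G.dist p.1 p.2) (Finset.mem_univ (x, y))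
  have hpos : ∀ x y : V, 0 < lazyProb G n₀ x y := lazyProb_pos_all G hconn hcard hdist
  set δ : ℝ := Finset.univ.inf' Finset.univ_nonempty
    (fun p : V × V => lazyProb G n₀ p.1 p.2) with hδdef
  have hδpos : 0 < δ := by
    rw [hδdef, Finset.lt_inf'_iff]
    exact fun p _ => hpos p.1 p.2
  have hδle : ∀ x z : V, δ ≤ lazyProb G n₀ x z := fun x z =>
    Finset.inf'_le (fun p : V × V => lazyProb G n₀ p.1 p.2) (Finset.mem_univ (x, z))
  have hNδ : (Fintype.card V : ℝ) * δ ≤ 1 := by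
    have x₀ := Classical.arbitrary V
    have h1 : ∑ z : V, δ ≤ ∑ z : V, lazyProb G n₀ x₀ z :=
      Finset.sum_le_sum fun z _ => hδle x₀ z
    rw [lazyProb_sum_right G hd, Finset.sum_const, Finset.card_univ, nsmul_eq_mul] at h1
    exact h1
  have hr1 : (1 - (Fintype.card V : ℝ) * δ) < 1 := by nlinarith
  have hr0 : 0 ≤ 1 - (Fintype.card V : ℝ) * δ := by linarith
  obtain ⟨k, hk⟩ := exists_pow_lt_of_lt_one (x := 1 / (4 * (Fintype.card V : ℝ)))
    (by positivity) hr1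
  refine ⟨k * n₀, fun x y => ?_⟩
  have hπ : statDist G y = 1 / (Fintype.card V : ℝ) := statDist_eq G hreg hdpos y
  have hosc := osc_geom G hreg hd hδle hδpos.le hNδ k y
  have habs := abs_sub_inv_card_le G hreg hd (k * n₀) x y
  have : |lazyProb G (k * n₀) x y - 1 / (Fintype.card V : ℝ)| ≤ 1 / (4 * (Fintype.card V : ℝ)) :=
    le_trans habs (le_trans hosc hk.le)
  rw [hπ]
  have hNe : (Fintype.card V : ℝ) ≠ 0 := ne_of_gt hN
  have e : lazyProb G (k * n₀) x y / (1 / (Fintype.card V : ℝ)) - 1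
      = (Fintype.card V : ℝ) * (lazyProb G (k * n₀) x y - 1 / (Fintype.card V : ℝ)) := by
    field_simp
  rw [e, abs_mul, abs_of_nonneg hN.le]
  calc (Fintype.card V : ℝ) * |lazyProb G (k * n₀) x y - 1 / (Fintype.card V : ℝ)|
      ≤ (Fintype.card V : ℝ) * (1 / (4 * (Fintype.card V : ℝ))) :=
        mul_le_mul_of_nonneg_left this hN.le
    _ = 1 / 4 := by field_simp

lemma tmix_spec (hconn : G.Connected) (hcard : 2 ≤ Fintype.card V)
    {d : ℕ} (hreg : G.IsRegularOfDegree d) {n : ℕ} (hn : tmix G ≤ n) :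
    ∀ x y : V, |lazyProb G n x y / statDist G y - 1| ≤ 1 / 4 := by
  have hd : ∀ x : V, 0 < G.degree x := degree_pos_of_connected G hconn hcard
  have hmem : tmix G ∈ {n : ℕ | ∀ x y : V, |lazyProb G n x y / statDist G y - 1| ≤ 1 / 4} :=
    Nat.sInf_mem (mix_nonempty G hconn hcard hreg)
  induction n, hn using Nat.le_induction with
  | base => exact hmem
  | succ n _ ih => exact mix_upward G hd ih

lemma tmix_pos (hconn : G.Connected) (hcard : 2 ≤ Fintype.card V)
    {d : ℕ} (hreg : G.IsRegularOfDegree d) : 1 ≤ tmix G := by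
  by_contra h
  push_neg at h
  interval_cases h' : tmix G
  · have := tmix_spec G hconn hcard hreg (n := 0) (by omega)
    obtain ⟨x, y, hxy⟩ := Fintype.exists_pair_of_one_lt_card (α := V) (by omega)
    have hd : ∀ x : V, 0 < G.degree x := degree_pos_of_connected G hconn hcard
    have hdpos : 0 < d := by have := hd x; rwa [hreg _] at this
    have hπ : statDist G y = 1 / (Fintype.card V : ℝ) := statDist_eq G hreg hdpos y
    have h0 : lazyProb G 0 x y = 0 := by simp [lazyProb, hxy]
    have := this x y
    rw [h0, hπ] at this
    simp at this
    norm_num at this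

end Aux






/-- Upper bound on the doubly-indexed return quantity `H^W_ρ(m)`. -/
theorem HW_upper_bound
    (G : SimpleGraph V) [DecidableRel G.Adj] (hconn : G.Connected)
    (hcard : 2 ≤ Fintype.card V) (d : ℕ) (hreg : G.IsRegularOfDegree d)
    (ρ : V) (m : ℕ) (hm : tmix G + 1 ≤ m) :
    HW G ρ m ≤ (⨆ ρ' : V, HW G ρ' (tmix G)) + (5 / 2) * (m : ℝ) ^ 2 / (Fintype.card V : ℝ) := by
  classical
  set t := tmix G with ht
  have hd : ∀ x : V, 0 < G.degree x := degree_pos_of_connected G hconn hcard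
  have hdpos : 0 < d := by have := hd ρ; rwa [hreg _] at this
  have hN : (0:ℝ) < (Fintype.card V : ℝ) := by exact_mod_cast Fintype.card_pos
  have ht1 : 1 ≤ t := tmix_pos G hconn hcard hreg
  have hm2 : 2 ≤ m := by omega
  -- pointwise bound after mixing
  have hbound : ∀ n : ℕ, t ≤ n → lazyProb G n ρ ρ ≤ 5 / (4 * (Fintype.card V : ℝ)) := by
    intro n hn
    have h := (abs_le.mp (tmix_spec G hconn hcard hreg hn ρ ρ)).2
    rw [statDist_eq G hreg hdpos ρ] at h
    have e : lazyProb G n ρ ρ / (1 / (Fintype.card V : ℝ))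
        = lazyProb G n ρ ρ * (Fintype.card V : ℝ) := by field_simp
    rw [e] at h
    rw [le_div_iff₀ (by positivity : (0:ℝ) < 4 * (Fintype.card V : ℝ))]
    nlinarith
  set f : ℕ × ℕ → ℝ := fun p => lazyProb G (p.1 + p.2) ρ ρ with hf
  set S := Finset.range (m + 1) ×ˢ Finset.range (m + 1) with hS
  set T := Finset.range (t + 1) ×ˢ Finset.range (t + 1) with hT
  have hTS : T ⊆ S :=
    Finset.product_subset_product
      (Finset.range_subset_range.mpr (by omega)) (Finset.range_subset_range.mpr (by omega))
  have hHm : HW G ρ m = ∑ p ∈ S, f p := by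
    rw [hS, Finset.sum_product]; rfl
  have hHt : HW G ρ t = ∑ p ∈ T, f p := by
    rw [hT, Finset.sum_product]; rfl
  have hsplit : ∑ p ∈ S, f p = ∑ p ∈ T, f p + ∑ p ∈ S \ T, f p := by
    rw [add_comm, Finset.sum_sdiff hTS]
  have hcardS : (S \ T).card = (m + 1) ^ 2 - (t + 1) ^ 2 := by
    rw [Finset.card_sdiff_of_subset hTS, hS, hT, Finset.card_product, Finset.card_product,
      Finset.card_range, Finset.card_range, sq, sq]
  have hrest : ∑ p ∈ S \ T, f p ≤ ((S \ T).card : ℝ) * (5 / (4 * (Fintype.card V : ℝ))) := by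
    have := Finset.sum_le_card_nsmul (S \ T) f (5 / (4 * (Fintype.card V : ℝ))) ?_
    · rwa [nsmul_eq_mul] at this
    · intro p hp
      rw [Finset.mem_sdiff, hS, hT, Finset.mem_product, Finset.mem_product,
        Finset.mem_range, Finset.mem_range, Finset.mem_range, Finset.mem_range] at hp
      exact hbound (p.1 + p.2) (by omega)
  have hcard_le : ((S \ T).card : ℝ) ≤ 2 * (m : ℝ) ^ 2 := by
    rw [hcardS]
    have hle : (t + 1) ^ 2 ≤ (m + 1) ^ 2 := Nat.pow_le_pow_left (by omega) 2
    rw [Nat.cast_sub hle]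
    push_cast
    have hmr : (2 : ℝ) ≤ (m : ℝ) := by exact_mod_cast hm2
    have htr : (1 : ℝ) ≤ (t : ℝ) := by exact_mod_cast ht1
    nlinarith
  have hsup : HW G ρ t ≤ ⨆ ρ' : V, HW G ρ' t :=
    le_ciSup (f := fun ρ' : V => HW G ρ' t) (Set.Finite.bddAbove (Set.finite_range _)) ρ
  have hfinal : ∑ p ∈ S \ T, f p ≤ (5 / 2) * (m : ℝ) ^ 2 / (Fintype.card V : ℝ) := by
    calc ∑ p ∈ S \ T, f p ≤ ((S \ T).card : ℝ) * (5 / (4 * (Fintype.card V : ℝ))) := hrest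
      _ ≤ 2 * (m : ℝ) ^ 2 * (5 / (4 * (Fintype.card V : ℝ))) := by
          exact mul_le_mul_of_nonneg_right hcard_le (by positivity)
      _ = (5 / 2) * (m : ℝ) ^ 2 / (Fintype.card V : ℝ) := by
          field_simp; ring
  rw [hHm, hsplit, ← hHt]
  exact add_le_add hsup hfinal
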